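/- Let B = (b_{ij}) be an n×n skew-symmetric integer matrix such that the quiver Q(B) is acyclic, and let G be a subgroup of S_n with σB = B for all σ ∈ G. Then for any two indices i, j ∈ {1,…,n} in the same G-orbit and any ℓ ∈ {1,…,n}: the entries b_{iℓ} and b_{jℓ} are both nonnegative or both nonpositive, and likewise b_{ℓi} and b_{ℓj} are both nonnegative or both nonpositive (equivalently, b_{iℓ}·b_{jℓ} ≥ 0 and b_{ℓi}·b_{ℓj} ≥ 0). -/

import Mathlib

/-- If `B` is skew-symmetric with acyclic quiver `Q(B)` (arrow `i → j` iff `b_{ji} > 0`)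
and `σB = B` for all `σ` in a subgroup `G` of `S_n`, then for any `i`, `j` in the same
`G`-orbit and any `ℓ`, the entries `b_{iℓ}`, `b_{jℓ}` are both nonnegative or both
nonpositive, and likewise `b_{ℓi}`, `b_{ℓj}` (equivalently, the products are `≥ 0`). -/
theorem stmt_9 {n : ℕ} (B : Matrix (Fin n) (Fin n) ℤ)
    (hskew : ∀ i j, B j i = -B i j)
    (hacyc : ∀ i, ¬ Relation.TransGen (fun a b : Fin n => 0 < B b a) i i)
    (G : Subgroup (Equiv.Perm (Fin n)))
    (hinv : ∀ σ ∈ G, ∀ i j, B (σ⁻¹ i) (σ⁻¹ j) = B i j)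
    (i j : Fin n) (hij : ∃ σ ∈ G, σ i = j) (ℓ : Fin n) :
    0 ≤ B i ℓ * B j ℓ ∧ 0 ≤ B ℓ i * B ℓ j := by
  set R : Fin n → Fin n → Prop := fun a b => 0 < B b a with hR
  -- invariance of B under all of G, in the "forward" form
  have hBinv : ∀ σ ∈ G, ∀ a b, B (σ a) (σ b) = B a b := by
    intro σ hσ a b
    have := hinv σ hσ (σ a) (σ b)
    simpa using this.symm
  -- TransGen R is preserved by elements of G
  have hmap : ∀ σ ∈ G, ∀ a b, Relation.TransGen R a b →
      Relation.TransGen R (σ a) (σ b) := by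
    intro σ hσ a b h
    refine Relation.TransGen.lift σ (fun a b hab => ?_) a b h
    simpa [hR, hBinv σ hσ, Function.onFun] using hab
  -- elements of the same orbit are incomparable
  have hincomp : ∀ a b : Fin n, (∃ σ ∈ G, σ a = b) → ¬ Relation.TransGen R a b := by
    intro a b hab h
    obtain ⟨σ, hσ, hσa⟩ := hab
    have key : ∀ k : ℕ, Relation.TransGen R a ((σ ^ (k + 1)) a) := by
      intro k
      induction k with
      | zero => simpa [pow_one, hσa] using h
      | succ k ih =>
          have h2 := hmap (σ ^ (k + 1)) (pow_mem hσ _) a b h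
          have : (σ ^ (k + 1)) b = (σ ^ (k + 2)) a := by
            rw [← hσa]
            simp [pow_succ, Equiv.Perm.mul_apply]
          rw [this] at h2
          exact ih.trans h2
    have hm : 0 < orderOf σ := orderOf_pos σ
    obtain ⟨k, hk⟩ := Nat.exists_eq_add_of_lt hm
    have := key ((orderOf σ) * (orderOf σ) - 1)
    have hpow : σ ^ ((orderOf σ) * (orderOf σ) - 1 + 1) = 1 := by
      have : (orderOf σ) * (orderOf σ) - 1 + 1 = (orderOf σ) * (orderOf σ) := by
        have : 0 < (orderOf σ) * (orderOf σ) := Nat.mul_pos hm hm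
        omega
      rw [this, pow_mul, pow_orderOf_eq_one, one_pow]
    rw [hpow] at this
    simp at this
    exact hacyc a this
  have hji : ∃ σ ∈ G, σ j = i := by
    obtain ⟨σ, hσ, hσi⟩ := hij
    exact ⟨σ⁻¹, inv_mem hσ, by simp [← hσi]⟩
  -- first product
  have h1 : 0 ≤ B i ℓ * B j ℓ := by
    rcases le_or_gt 0 (B i ℓ) with h1 | h1
    · rcases le_or_gt 0 (B j ℓ) with h2 | h2
      · exact mul_nonneg h1 h2
      · -- B i ℓ > 0 (if ≠ 0) gives arrow ℓ→i; B j ℓ < 0 gives B ℓ j > 0, arrow j→ℓ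
        rcases h1.eq_or_lt with h1 | h1
        · rw [← h1]; simp
        · exfalso
          have hjl : R j ℓ := by simpa [hR, hskew ℓ j] using h2
          have hli : R ℓ i := by simpa [hR] using h1
          exact hincomp j i hji ((Relation.TransGen.single hjl).trans
            (Relation.TransGen.single hli))
    · rcases le_or_gt (B j ℓ) 0 with h2 | h2
      · nlinarith
      · exfalso
        have hil : R i ℓ := by
          have : 0 < B ℓ i := by rw [hskew i ℓ]; omega
          simpa [hR] using this
        have hlj : R ℓ j := by simpa [hR] using h2
        obtain ⟨σ, hσ, hσi⟩ := hij
        exact hincomp i j ⟨σ, hσ, hσi⟩ ((Relation.TransGen.single hil).trans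
          (Relation.TransGen.single hlj))
  refine ⟨h1, ?_⟩
  have : B ℓ i * B ℓ j = B i ℓ * B j ℓ := by
    rw [hskew i ℓ, hskew j ℓ]; ring
  rw [this]; exact h1
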